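/- Let V be a vector space over F_2 and d ∈ GL(V) of order 3. A subspace W of V is invariant under d if and only if W ⊆ C_V(d) or [V,d] ⊆ W, provided [V,d] is 2-dimensional. -/

import Mathlib

theorem stmt_1 (V : Type*) [AddCommGroup V] [Module (ZMod 2) V]
    (d : V ≃ₗ[ZMod 2] V) (hd3 : d ^ 3 = 1) (hd1 : d ≠ 1)
    (hdim : Module.rank (ZMod 2)
      (LinearMap.range ((d : V →ₗ[ZMod 2] V) - LinearMap.id)) = 2)
    (W : Submodule (ZMod 2) V) :
    (∀ v ∈ W, d v ∈ W) ↔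
      W ≤ LinearMap.ker ((d : V →ₗ[ZMod 2] V) - LinearMap.id) ∨
      LinearMap.range ((d : V →ₗ[ZMod 2] V) - LinearMap.id) ≤ W := by
  set f : V →ₗ[ZMod 2] V := (d : V →ₗ[ZMod 2] V) - LinearMap.id with hf
  have hchar : ∀ v : V, v + v = 0 := by
    intro v
    have h : (2 : ZMod 2) • v = v + v := two_smul _ v
    rw [show (2 : ZMod 2) = 0 by decide, zero_smul] at h
    exact h.symm
  have hneg : ∀ v : V, -v = v := fun v => by rw [neg_eq_iff_add_eq_zero, hchar]
  have hfv : ∀ v : V, f v = d v - v := fun v => rfl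
  have hd3' : ∀ v : V, d (d (d v)) = v := by
    intro v
    have h := congrArg (fun e : V ≃ₗ[ZMod 2] V => e v) hd3
    simpa [pow_succ] using h
  have key : ∀ w : V, f (f w) = 0 → f w = 0 := by
    intro w h
    rw [hfv, hfv, map_sub] at h
    have h4 : d (d w) + w = 0 := by
      have h2 := hchar (d w)
      calc d (d w) + w = (d (d w) - d w - (d w - w)) + (d w + d w) := by abel
        _ = 0 := by rw [h, h2]; abel
    have h5 : d (d w) = w := by
      have h5' := eq_neg_of_add_eq_zero_left h4
      rw [hneg] at h5'; exact h5'
    have h6 : d w = w := by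
      have h6' := congrArg d h5
      rw [hd3' w] at h6'; exact h6'.symm
    rw [hfv, h6, sub_self]
  constructor
  · intro hW
    by_cases hker : W ≤ LinearMap.ker f
    · exact Or.inl hker
    · right
      obtain ⟨v, hvW, hv⟩ : ∃ v ∈ W, f v ≠ 0 := by
        by_contra hc
        push_neg at hc
        exact hker fun x hx => LinearMap.mem_ker.2 (hc x hx)
      set u : V := f v with hu
      have huW : u ∈ W := by
        have h := hfv v
        rw [hu, h]; exact W.sub_mem (hW v hvW) hvW
      have hufW : f u ∈ W := by
        rw [hfv]; exact W.sub_mem (hW u huW) huW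
      have huR : u ∈ LinearMap.range f := ⟨v, rfl⟩
      have hfuR : f u ∈ LinearMap.range f := ⟨u, rfl⟩
      have hfu0 : f u ≠ 0 := fun h0 => hv (key v h0)
      have hfuu : f u ≠ u := by
        intro h0
        apply hv
        rw [hfv] at h0
        have hdu : d u = u + u := sub_eq_iff_eq_add.mp h0
        rw [hchar] at hdu
        have hu0 : u = 0 := by simpa using congrArg d.symm hdu
        exact hu0
      have hli : LinearIndependent (ZMod 2) ![u, f u] := by
        rw [LinearIndependent.pair_iff]
        intro s t hst
        fin_cases s <;> fin_cases t
        · exact ⟨rfl, rfl⟩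
        · exfalso; apply hfu0; change (0 : ZMod 2) • u + (1 : ZMod 2) • f u = 0 at hst; simpa using hst
        · exfalso; apply hv; change (1 : ZMod 2) • u + (0 : ZMod 2) • f u = 0 at hst; simpa using hst
        · exfalso
          apply hfuu
          have h8 : u + f u = 0 := by change (1 : ZMod 2) • u + (1 : ZMod 2) • f u = 0 at hst; simpa using hst
          have h9 := eq_neg_of_add_eq_zero_right h8
          rw [hneg] at h9; exact h9
      have hfin : FiniteDimensional (ZMod 2) (LinearMap.range f) :=
        Module.finite_of_rank_eq_nat hdim
      have hfr : Module.finrank (ZMod 2) (LinearMap.range f) = 2 :=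
        Module.finrank_eq_of_rank_eq hdim
      set S := Submodule.span (ZMod 2) {u, f u} with hS
      have hSle : S ≤ LinearMap.range f := by
        rw [hS, Submodule.span_le]
        rintro x hx
        simp only [Set.mem_insert_iff, Set.mem_singleton_iff] at hx
        rcases hx with rfl | rfl
        · exact huR
        · exact hfuR
      have hfrS : Module.finrank (ZMod 2) S = 2 := by
        have h1 := finrank_span_eq_card hli
        have h2 : Set.range ![u, f u] = {u, f u} := by
          ext x; simp [Fin.exists_fin_two, or_comm]
        rw [h2] at h1
        simpa using h1
      have hSeq : S = LinearMap.range f := by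
        apply Submodule.eq_of_le_of_finrank_le hSle
        rw [hfr, hfrS]
      rw [← hSeq, hS, Submodule.span_le]
      rintro x hx
      simp only [Set.mem_insert_iff, Set.mem_singleton_iff] at hx
      rcases hx with rfl | rfl
      · exact huW
      · exact hufW
  · rintro (hker | hrange) v hvW
    · have h := hker hvW
      rw [LinearMap.mem_ker, hfv, sub_eq_zero] at h
      rw [h]; exact hvW
    · have h : f v ∈ W := hrange ⟨v, rfl⟩
      rw [hfv] at h
      have h2 := W.add_mem h hvW
      simpa using h2
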